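/- Define S(x) := Σ_{a=0}^∞ wal_{2^a}(x) · 2^{−3a} = Σ_{a=0}^∞ (−1)^{x_{a+1}} 2^{−3a} for x ∈ [0,1). Then for every dyadic rational x ∈ [0,1), the right derivative of S at x is 0, i.e., lim_{h → 0⁺} (S(x + h) − S(x))/h = 0; and for every dyadic rational x ∈ (0,1), (S(x) − S(x − h))/h → −∞ as h → 0⁺. -/

import Mathlib

noncomputable def binDigit (ℓ : ℕ) (x : ℝ) : ℕ := (⌊(2 : ℝ) ^ ℓ * x⌋).toNat % 2

noncomputable def walsh (k : ℕ) (x : ℝ) : ℝ :=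
  (-1 : ℝ) ^ (∑ ℓ ∈ Finset.range (k + 1), (k / 2 ^ ℓ % 2) * binDigit (ℓ + 1) x)

noncomputable def Sser (x : ℝ) : ℝ := ∑' a : ℕ, walsh (2 ^ a) x * (2 : ℝ) ^ (-(3 * (a : ℤ)))

lemma walsh_two_pow (a : ℕ) (x : ℝ) :
    walsh (2 ^ a) x = (-1 : ℝ) ^ (binDigit (a + 1) x) := by
  unfold walsh
  congr 1
  rw [Finset.sum_eq_single a]
  · rw [Nat.div_self (by positivity)]
    simp
  · intro b _ hb
    rcases lt_or_gt_of_ne hb with hlt | hgt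
    · rw [Nat.pow_div hlt.le (by norm_num)]
      have h1 : a - b ≠ 0 := by omega
      obtain ⟨c, hc⟩ : ∃ c, a - b = c + 1 := ⟨a - b - 1, by omega⟩
      rw [hc, pow_succ]
      simp [Nat.mul_mod]
    · rw [Nat.div_eq_of_lt (Nat.pow_lt_pow_right one_lt_two hgt)]
      simp
  · intro h
    exact absurd (Finset.mem_range.2 (by have := @Nat.lt_two_pow_self a; omega)) h

section FloorLemmas

variable {x h : ℝ} {m ℓ : ℕ} {k : ℤ}

lemma fract_mul_int (hk : (2:ℝ)^m * x = k) (hℓ : ℓ ≤ m) :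
    ∃ t : ℤ, (2:ℝ)^(m-ℓ) * Int.fract ((2:ℝ)^ℓ * x) = t := by
  refine ⟨k - 2^(m-ℓ) * ⌊(2:ℝ)^ℓ * x⌋, ?_⟩
  have h2 : (2:ℝ)^(m-ℓ) * (2:ℝ)^ℓ = (2:ℝ)^m := by
    rw [← pow_add]; congr 1; omega
  rw [← Int.self_sub_floor]
  push_cast
  rw [mul_sub, ← mul_assoc, h2, hk]

lemma floor_add_eq (hk : (2:ℝ)^m * x = k) (hℓ : ℓ ≤ m)
    (hh0 : 0 ≤ h) (hh1 : (2:ℝ)^m * h < 1) :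
    ⌊(2:ℝ)^ℓ * (x + h)⌋ = ⌊(2:ℝ)^ℓ * x⌋ := by
  obtain ⟨t, ht⟩ := fract_mul_int hk hℓ
  set c : ℝ := (2:ℝ)^(m-ℓ) with hcdef
  have hc : 0 < c := by positivity
  set f := Int.fract ((2:ℝ)^ℓ * x) with hfdef
  have hf0 : 0 ≤ f := Int.fract_nonneg _
  have hf1 : f < 1 := Int.fract_lt_one _
  have h2 : c * (2:ℝ)^ℓ = (2:ℝ)^m := by
    rw [hcdef, ← pow_add]; congr 1; omega
  have htle : (t:ℝ) ≤ c - 1 := by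
    have h3 : t < 2^(m-ℓ) := by
      have : (t:ℝ) < ((2^(m-ℓ) : ℤ) : ℝ) := by push_cast; nlinarith
      exact_mod_cast this
    have h4 : (t:ℝ) ≤ ((2^(m-ℓ) : ℤ) : ℝ) - 1 := by exact_mod_cast Int.le_sub_one_of_lt h3
    push_cast at h4 ⊢; linarith
  have hp : (0:ℝ) < (2:ℝ)^ℓ := by positivity
  have key : f + (2:ℝ)^ℓ * h < 1 := by
    have h5 : c * ((2:ℝ)^ℓ * h) = (2:ℝ)^m * h := by rw [← mul_assoc, h2]
    nlinarith
  have hfe : (⌊(2:ℝ)^ℓ * x⌋ : ℝ) + f = (2:ℝ)^ℓ * x := Int.floor_add_fract _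
  rw [Int.floor_eq_iff]
  constructor
  · nlinarith
  · push_cast; nlinarith

lemma floor_sub_eq (hk : (2:ℝ)^m * x = k) (hℓ : ℓ ≤ m)
    (hnot : ∀ t : ℤ, (2:ℝ)^ℓ * x ≠ t)
    (hh0 : 0 ≤ h) (hh1 : (2:ℝ)^m * h ≤ 1) :
    ⌊(2:ℝ)^ℓ * (x - h)⌋ = ⌊(2:ℝ)^ℓ * x⌋ := by
  obtain ⟨t, ht⟩ := fract_mul_int hk hℓ
  set c : ℝ := (2:ℝ)^(m-ℓ) with hcdef
  have hc : 0 < c := by positivity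
  set f := Int.fract ((2:ℝ)^ℓ * x) with hfdef
  have hf0 : 0 < f := by
    rcases lt_or_eq_of_le (Int.fract_nonneg ((2:ℝ)^ℓ * x)) with h' | h'
    · exact h'
    · exfalso
      apply hnot ⌊(2:ℝ)^ℓ * x⌋
      have := Int.floor_add_fract ((2:ℝ)^ℓ * x)
      rw [← h'] at this; linarith
  have hf1 : f < 1 := Int.fract_lt_one _
  have h2 : c * (2:ℝ)^ℓ = (2:ℝ)^m := by
    rw [hcdef, ← pow_add]; congr 1; omega
  have htge : (1:ℝ) ≤ (t:ℝ) := by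
    have h3 : (0:ℝ) < (t:ℝ) := by rw [← ht]; positivity
    have : 0 < t := by exact_mod_cast h3
    exact_mod_cast this
  have hp : (0:ℝ) < (2:ℝ)^ℓ := by positivity
  have key : (2:ℝ)^ℓ * h ≤ f := by
    have h5 : c * ((2:ℝ)^ℓ * h) = (2:ℝ)^m * h := by rw [← mul_assoc, h2]
    nlinarith
  have hfe : (⌊(2:ℝ)^ℓ * x⌋ : ℝ) + f = (2:ℝ)^ℓ * x := Int.floor_add_fract _
  rw [Int.floor_eq_iff]
  constructor
  · nlinarith
  · push_cast; nlinarith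

lemma floor_sub_eq_top (hk : (2:ℝ)^m * x = k) (hh0 : 0 < h) (hh1 : (2:ℝ)^m * h ≤ 1) :
    ⌊(2:ℝ)^m * (x - h)⌋ = k - 1 := by
  rw [Int.floor_eq_iff]
  rw [mul_sub, hk]
  constructor
  · push_cast; linarith
  · push_cast; nlinarith [pow_pos (by norm_num : (0:ℝ) < 2) m]

lemma floor_add_eq_top (hk : (2:ℝ)^m * x = k) (hℓ : m < ℓ) :
    ⌊(2:ℝ)^ℓ * (x + h)⌋ = 2^(ℓ-m) * k + ⌊(2:ℝ)^ℓ * h⌋ := by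
  have h2 : (2:ℝ)^(ℓ-m) * (2:ℝ)^m = (2:ℝ)^ℓ := by
    rw [← pow_add]; congr 1; omega
  have h3 : (2:ℝ)^ℓ * (x + h) = ((2^(ℓ-m) * k : ℤ) : ℝ) + (2:ℝ)^ℓ * h := by
    push_cast
    rw [mul_add]
    rw [show (2:ℝ)^ℓ * x = (2:ℝ)^(ℓ-m) * ((2:ℝ)^m * x) by rw [← mul_assoc, h2]]
    rw [hk]
  rw [h3, Int.floor_intCast_add]

end FloorLemmas

noncomputable def Fa (y : ℝ) (a : ℕ) : ℝ := (-1:ℝ)^(binDigit (a+1) y) * (1/8:ℝ)^a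

lemma norm_Fa (y : ℝ) (a : ℕ) : ‖Fa y a‖ = (1/8:ℝ)^a := by
  unfold Fa
  rw [norm_mul, norm_pow, norm_neg, norm_one, one_pow, one_mul,
    Real.norm_of_nonneg (by positivity)]

lemma summable_Fa (y : ℝ) : Summable (Fa y) :=
  Summable.of_norm_bounded (summable_geometric_of_lt_one (by norm_num) (by norm_num))
    (fun a => le_of_eq (norm_Fa y a))

lemma Sser_eq (y : ℝ) : Sser y = ∑' a, Fa y a := by
  unfold Sser Fa
  refine tsum_congr fun a => ?_
  rw [walsh_two_pow]
  congr 1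
  rw [zpow_neg]
  rw [show (3 * (a:ℤ)) = ((3*a : ℕ) : ℤ) by push_cast; ring]
  rw [zpow_natCast, pow_mul, div_pow, one_pow]
  norm_num

lemma binDigit_eq_zero {ℓ : ℕ} {y : ℝ} (h : ⌊(2:ℝ)^ℓ * y⌋ % 2 = 0) : binDigit ℓ y = 0 := by
  unfold binDigit; omega

lemma binDigit_eq_one {ℓ : ℕ} {y : ℝ} (h : ⌊(2:ℝ)^ℓ * y⌋ % 2 = 1) (h0 : 0 ≤ ⌊(2:ℝ)^ℓ * y⌋) :
    binDigit ℓ y = 1 := by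
  unfold binDigit; omega

lemma even_pow_mul_mod {c : ℕ} (k : ℤ) (hc : c ≠ 0) : (2^c * k) % 2 = 0 := by
  obtain ⟨d, hd⟩ : ∃ d, c = d + 1 := ⟨c - 1, by omega⟩
  rw [hd, pow_succ, mul_comm ((2:ℤ)^d) 2, mul_assoc, Int.mul_emod_right]

lemma right_est {x h : ℝ} {m : ℕ} {k : ℤ} (hk : (2:ℝ)^m * x = k)
    (hh0 : 0 < h) (hh1 : (2:ℝ)^m * h < 1) :
    ‖Sser (x+h) - Sser x‖ ≤ 16 * h^2 := by
  rw [Sser_eq, Sser_eq, ← Summable.tsum_sub (summable_Fa (x+h)) (summable_Fa x)]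
  have hb : HasSum (fun a : ℕ => 8*h^2*(1/2:ℝ)^a) (8*h^2*(1-1/2:ℝ)⁻¹) :=
    (hasSum_geometric_of_lt_one (by norm_num) (by norm_num)).mul_left _
  have hpt : ∀ a : ℕ, ‖Fa (x+h) a - Fa x a‖ ≤ 8*h^2*(1/2:ℝ)^a := by
    intro a
    by_cases hcase : a + 1 ≤ m
    · have heq : binDigit (a+1) (x+h) = binDigit (a+1) x := by
        unfold binDigit; rw [floor_add_eq hk hcase hh0.le hh1]
      unfold Fa
      rw [heq, sub_self, norm_zero]
      positivity
    · push_neg at hcase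
      have hx0 : ⌊(2:ℝ)^(a+1) * x⌋ = 2^(a+1-m)*k := by
        have := floor_add_eq_top (h := 0) hk hcase
        simpa using this
      have hdx : binDigit (a+1) x = 0 := by
        apply binDigit_eq_zero
        rw [hx0]
        exact even_pow_mul_mod k (by omega)
      by_cases hsm : (2:ℝ)^(a+1) * h < 1
      · have hfh : ⌊(2:ℝ)^(a+1) * h⌋ = 0 :=
          Int.floor_eq_zero_iff.2 ⟨by positivity, hsm⟩
        have hdxh : binDigit (a+1) (x+h) = 0 := by
          apply binDigit_eq_zero
          rw [floor_add_eq_top hk hcase, hfh, add_zero]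
          exact even_pow_mul_mod k (by omega)
        unfold Fa
        rw [hdxh, hdx, sub_self, norm_zero]
        positivity
      · push_neg at hsm
        have hb2 : ‖Fa (x+h) a - Fa x a‖ ≤ (1/8:ℝ)^a + (1/8:ℝ)^a := by
          refine (norm_sub_le _ _).trans ?_
          rw [norm_Fa, norm_Fa]
        refine hb2.trans ?_
        rw [show (1/8:ℝ) = (1/2)*(1/4) by norm_num, mul_pow]
        have h4 : (1/4:ℝ)^a * 4^a = 1 := by rw [← mul_pow]; norm_num
        have h2a : (2:ℝ)^a * (2:ℝ)^a = 4^a := by rw [← mul_pow]; norm_num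
        have hsm' : 1 ≤ 2 * (2:ℝ)^a * h := by
          rw [pow_succ] at hsm; nlinarith
        have hq : 1 ≤ 4 * (4:ℝ)^a * h^2 := by nlinarith [pow_pos (by norm_num : (0:ℝ) < 2) a]
        have h12 : (0:ℝ) < (1/2:ℝ)^a := by positivity
        have h14 : (0:ℝ) < (1/4:ℝ)^a := by positivity
        nlinarith [pow_pos (by norm_num : (0:ℝ) < 4) a]
  calc ‖∑' a, (Fa (x+h) a - Fa x a)‖ ≤ 8*h^2*(1-1/2:ℝ)⁻¹ := tsum_of_norm_bounded hb hpt
    _ = 16 * h^2 := by norm_num; ring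

lemma norm_g_le (x h : ℝ) (a : ℕ) : ‖Fa x a - Fa (x-h) a‖ ≤ 2*(1/8:ℝ)^a := by
  refine (norm_sub_le _ _).trans ?_
  rw [norm_Fa, norm_Fa]; linarith

lemma summable_two_eighth : Summable (fun a : ℕ => 2*(1/8:ℝ)^a) :=
  (summable_geometric_of_lt_one (by norm_num) (by norm_num)).mul_left 2

lemma left_est {x h : ℝ} {m : ℕ} {k : ℤ} (hk : (2:ℝ)^m * x = k)
    (hm1 : 1 ≤ m) (hk1 : 1 ≤ k) (hkodd : k % 2 = 1)
    (hmin : ∀ ℓ, ℓ < m → ∀ t : ℤ, (2:ℝ)^ℓ * x ≠ t)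
    (hh0 : 0 < h) (hh1 : (2:ℝ)^m * h ≤ 1) :
    Sser x - Sser (x-h) ≤ -(1/8:ℝ)^(m-1) := by
  classical
  rw [Sser_eq, Sser_eq, ← Summable.tsum_sub (summable_Fa x) (summable_Fa (x-h))]
  set g : ℕ → ℝ := fun a => Fa x a - Fa (x-h) a with hg
  have hsg : Summable g := (summable_Fa x).sub (summable_Fa (x-h))
  rw [Summable.tsum_eq_add_tsum_ite hsg (m-1)]
  have hmm : m - 1 + 1 = m := by omega
  have hdx : binDigit m x = 1 := by
    apply binDigit_eq_one
    · rw [hk, Int.floor_intCast]; omega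
    · rw [hk, Int.floor_intCast]; omega
  have hdxh : binDigit m (x-h) = 0 := by
    apply binDigit_eq_zero
    rw [floor_sub_eq_top hk hh0 hh1]; omega
  have hgm : g (m-1) = -2 * (1/8:ℝ)^(m-1) := by
    simp only [hg, Fa, hmm, hdx, hdxh]; ring
  set v : ℕ → ℝ := fun a => if m ≤ a then 2*(1/8:ℝ)^a else 0 with hv
  have hsv : Summable v := by
    apply Summable.of_norm_bounded summable_two_eighth
    intro a
    by_cases h' : m ≤ a <;> simp [hv, h'] <;> positivity
  have hsite : Summable (fun a => if a = m-1 then 0 else g a) := by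
    apply Summable.of_norm_bounded summable_two_eighth
    intro a
    by_cases h' : a = m-1
    · simp only [h', if_pos rfl, norm_zero]
      norm_num
    · simp only [h', if_false]; exact norm_g_le x h a
  have hineq : ∀ a, (if a = m-1 then 0 else g a) ≤ v a := by
    intro a
    by_cases h' : a = m-1
    · simp only [h', if_pos rfl, hv]
      by_cases h'' : m ≤ m-1 <;> simp [h''] <;> positivity
    · simp only [h', if_false, hv]
      by_cases h'' : m ≤ a
      · simp only [h'', if_true]
        exact (le_abs_self _).trans ((Real.norm_eq_abs _ ▸ norm_g_le x h a))
      · simp only [h'', if_false]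
        have ha1 : a + 1 ≤ m := by omega
        have ha2 : a + 1 < m := by omega
        have heq : binDigit (a+1) x = binDigit (a+1) (x-h) := by
          unfold binDigit
          rw [floor_sub_eq hk ha1 (hmin (a+1) ha2) hh0.le hh1]
        simp only [hg, Fa, heq, sub_self, le_refl]
  have htail : ∑' a, (if a = m-1 then 0 else g a) ≤ ∑' a, v a :=
    Summable.tsum_le_tsum hineq hsite hsv
  have hvsum : ∑' a, v a = 2*(1/8:ℝ)^m * (1-1/8:ℝ)⁻¹ := by
    have h1 := Summable.sum_add_tsum_nat_add (f := v) m hsv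
    have h2 : ∑ i ∈ Finset.range m, v i = 0 := by
      apply Finset.sum_eq_zero
      intro i hi
      simp only [hv]
      rw [if_neg (by simp at hi; omega)]
    have h3 : ∑' i, v (i + m) = 2*(1/8:ℝ)^m * (1-1/8:ℝ)⁻¹ := by
      have : ∀ i : ℕ, v (i + m) = 2*(1/8:ℝ)^m * (1/8:ℝ)^i := by
        intro i
        simp only [hv, if_pos (Nat.le_add_left m i), pow_add]
        ring
      rw [tsum_congr this, tsum_mul_left, tsum_geometric_of_lt_one (by norm_num) (by norm_num)]
    rw [← h1, h2, h3, zero_add]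
  have hc : (0:ℝ) < (1/8:ℝ)^(m-1) := by positivity
  have h8 : (1/8:ℝ)^m = (1/8:ℝ)^(m-1) * (1/8) := by rw [← pow_succ, hmm]
  rw [hgm]
  have := htail.trans_eq hvsum
  nlinarith

theorem stmt_12 :
    (∀ x : ℝ, x ∈ Set.Ico (0 : ℝ) 1 → (∃ j mm : ℕ, x = (j : ℝ) / 2 ^ mm) →
      Filter.Tendsto (fun h : ℝ => (Sser (x + h) - Sser x) / h)
        (nhdsWithin 0 (Set.Ioi 0)) (nhds 0)) ∧
    (∀ x : ℝ, x ∈ Set.Ioo (0 : ℝ) 1 → (∃ j mm : ℕ, x = (j : ℝ) / 2 ^ mm) →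
      Filter.Tendsto (fun h : ℝ => (Sser x - Sser (x - h)) / h)
        (nhdsWithin 0 (Set.Ioi 0)) Filter.atBot) := by
  constructor
  · rintro x hx ⟨j, mm, hj⟩
    have h2mm : (0:ℝ) < 2^mm := by positivity
    have hk : (2:ℝ)^mm * x = ((j:ℤ):ℝ) := by rw [hj]; push_cast; field_simp
    refine squeeze_zero_norm' (a := fun h : ℝ => 16 * h) ?_ ?_
    · have hmem : Set.Ioo (0:ℝ) ((1:ℝ)/2^mm) ∈ nhdsWithin (0:ℝ) (Set.Ioi 0) :=
        Ioo_mem_nhdsGT_of_mem ⟨le_refl 0, by positivity⟩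
      filter_upwards [hmem] with h hh
      obtain ⟨h0, h1⟩ := hh
      have hlt : (2:ℝ)^mm * h < 1 := by
        rw [mul_comm]; exact (lt_div_iff₀ h2mm).1 h1
      have hest := right_est hk h0 hlt
      rw [norm_div, Real.norm_of_nonneg h0.le, div_le_iff₀ h0]
      calc ‖Sser (x+h) - Sser x‖ ≤ 16*h^2 := hest
        _ = 16*h*h := by ring
    · have : Filter.Tendsto (fun h:ℝ => 16*h) (nhds 0) (nhds 0) := by
        have hcont : Continuous (fun h:ℝ => 16*h) := by continuity
        simpa using hcont.tendsto (0:ℝ)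
      exact this.mono_left nhdsWithin_le_nhds
  · rintro x hx ⟨j, mm, hj⟩
    classical
    obtain ⟨hx0, hx1⟩ := hx
    have hex : ∃ n : ℕ, ∃ t : ℤ, (2:ℝ)^n * x = t :=
      ⟨mm, (j:ℤ), by rw [hj]; push_cast; field_simp⟩
    set m := Nat.find hex with hmdef
    obtain ⟨k, hk⟩ := Nat.find_spec hex
    rw [← hmdef] at hk
    have hmin : ∀ ℓ, ℓ < m → ∀ t : ℤ, (2:ℝ)^ℓ * x ≠ t := by
      intro ℓ hℓ t ht
      exact Nat.find_min hex hℓ ⟨t, ht⟩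
    have hm1 : 1 ≤ m := by
      by_contra hcon
      have hm0 : m = 0 := by omega
      rw [hm0] at hk
      simp only [pow_zero, one_mul] at hk
      have h1 : 0 < k := by exact_mod_cast hk ▸ hx0
      have h2 : k < 1 := by exact_mod_cast hk ▸ hx1
      omega
    have hkpos : 1 ≤ k := by
      have hp : (0:ℝ) < 2^m * x := mul_pos (by positivity) hx0
      rw [hk] at hp
      have : 0 < k := by exact_mod_cast hp
      omega
    have hkodd : k % 2 = 1 := by
      rcases Int.emod_two_eq_zero_or_one k with he | ho
      · exfalso
        obtain ⟨t, ht⟩ : ∃ t, k = 2*t := ⟨k/2, by omega⟩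
        apply hmin (m-1) (by omega) t
        have h2 : (2:ℝ) * ((2:ℝ)^(m-1) * x) = 2^m * x := by
          rw [← mul_assoc, ← pow_succ']
          congr 2
          omega
        have h3 : (2:ℝ) * ((2:ℝ)^(m-1) * x) = 2*(t:ℝ) := by
          rw [h2, hk, ht]; push_cast; ring
        exact mul_left_cancel₀ two_ne_zero h3
      · exact ho
    set c : ℝ := (1/8:ℝ)^(m-1) with hcdef
    have hc : 0 < c := by positivity
    have h2m : (0:ℝ) < 2^m := by positivity
    refine Filter.tendsto_atBot_mono' _ ?_ (f₁ := fun h : ℝ => -c * h⁻¹) ?_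
    · have hmem : Set.Ioo (0:ℝ) ((1:ℝ)/2^m) ∈ nhdsWithin (0:ℝ) (Set.Ioi 0) :=
        Ioo_mem_nhdsGT_of_mem ⟨le_refl 0, by positivity⟩
      filter_upwards [hmem] with h hh
      obtain ⟨h0, h1⟩ := hh
      have hle : (2:ℝ)^m * h ≤ 1 := by
        rw [mul_comm]; exact ((lt_div_iff₀ h2m).1 h1).le
      have hest := left_est hk hm1 hkpos hkodd hmin h0 hle
      show (Sser x - Sser (x-h)) / h ≤ -c * h⁻¹
      rw [← div_eq_mul_inv]
      exact (div_le_div_iff_of_pos_right h0).2 hest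
    · have h1 : Filter.Tendsto (fun h:ℝ => h⁻¹) (nhdsWithin (0:ℝ) (Set.Ioi 0)) Filter.atTop :=
        tendsto_inv_nhdsGT_zero
      have h2 : Filter.Tendsto (fun h:ℝ => c * h⁻¹) (nhdsWithin (0:ℝ) (Set.Ioi 0)) Filter.atTop :=
        h1.const_mul_atTop hc
      have h3 := Filter.tendsto_neg_atTop_atBot.comp h2
      have : (fun h : ℝ => -c * h⁻¹) = (Neg.neg ∘ fun h : ℝ => c * h⁻¹) := by
        funext h; simp [neg_mul]
      rw [this]
      exact h3
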